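/- If P(x) = Σ_{i=0}^n a_i x^i is a real polynomial with positive coefficients having only real zeros, then for 1 ≤ i ≤ n−1 one has a_i^2 ≥ a_{i−1} a_{i+1} (1 + 1/i)(1 + 1/(n−i)). -/

import Mathlib

open Polynomial Finset

/-- A real polynomial has only real zeros (all its zeros are real):
the number of real roots (with multiplicity) equals the degree. -/
def RealRooted (f : Polynomial ℝ) : Prop := f.roots.card = f.natDegree

/-- A real polynomial is standard if it is zero or has positive leading coefficient. -/
def Standard (f : Polynomial ℝ) : Prop := f = 0 ∨ 0 < f.leadingCoeff

/-- `g` alternates left of `f`: both have the same degree `n`, both are real-rooted,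
and with zeros listed in nonincreasing order `r 0 ≥ r 1 ≥ …` (for `f`) and
`s 0 ≥ s 1 ≥ …` (for `g`) we have `s n ≤ r n ≤ s (n-1) ≤ … ≤ s 0 ≤ r 0`. -/
def AltLeft (g f : Polynomial ℝ) : Prop :=
  ∃ n : ℕ, ∃ r s : Fin n → ℝ,
    f = Polynomial.C f.leadingCoeff * ∏ i, (Polynomial.X - Polynomial.C (r i)) ∧
    g = Polynomial.C g.leadingCoeff * ∏ i, (Polynomial.X - Polynomial.C (s i)) ∧
    (∀ i : Fin n, s i ≤ r i) ∧
    (∀ (i : ℕ) (h : i + 1 < n), r ⟨i + 1, h⟩ ≤ s ⟨i, Nat.lt_of_succ_lt h⟩)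

/-- `g` interlaces `f`: `deg f = deg g + 1` and the zeros weakly interleave. -/
def Interlaces (g f : Polynomial ℝ) : Prop :=
  ∃ n : ℕ, ∃ r : Fin (n + 1) → ℝ, ∃ s : Fin n → ℝ,
    f = Polynomial.C f.leadingCoeff * ∏ i, (Polynomial.X - Polynomial.C (r i)) ∧
    g = Polynomial.C g.leadingCoeff * ∏ i, (Polynomial.X - Polynomial.C (s i)) ∧
    ∀ i : Fin n, r i.succ ≤ s i ∧ s i ≤ r i.castSucc

/-- `g ⪯ f` : `g` alternates left of `f` or `g` interlaces `f`. -/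
def Prec (g f : Polynomial ℝ) : Prop := AltLeft g f ∨ Interlaces g f

/-- strict alternation -/
def StrictAltLeft (g f : Polynomial ℝ) : Prop :=
  ∃ n : ℕ, ∃ r s : Fin n → ℝ,
    f = Polynomial.C f.leadingCoeff * ∏ i, (Polynomial.X - Polynomial.C (r i)) ∧
    g = Polynomial.C g.leadingCoeff * ∏ i, (Polynomial.X - Polynomial.C (s i)) ∧
    (∀ i : Fin n, s i < r i) ∧
    (∀ (i : ℕ) (h : i + 1 < n), r ⟨i + 1, h⟩ < s ⟨i, Nat.lt_of_succ_lt h⟩)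

/-- strict interlacing -/
def StrictInterlaces (g f : Polynomial ℝ) : Prop :=
  ∃ n : ℕ, ∃ r : Fin (n + 1) → ℝ, ∃ s : Fin n → ℝ,
    f = Polynomial.C f.leadingCoeff * ∏ i, (Polynomial.X - Polynomial.C (r i)) ∧
    g = Polynomial.C g.leadingCoeff * ∏ i, (Polynomial.X - Polynomial.C (s i)) ∧
    ∀ i : Fin n, r i.succ < s i ∧ s i < r i.castSucc

/-- `g ≺ f` : strict alternation or strict interlacing. -/
def SPrec (g f : Polynomial ℝ) : Prop := StrictAltLeft g f ∨ StrictInterlaces g f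

/-- PF: nonnegative coefficients and only real zeros. -/
def PFpoly (f : Polynomial ℝ) : Prop := (∀ i, 0 ≤ f.coeff i) ∧ RealRooted f

lemma rr_derivative (f : Polynomial ℝ) (hf : RealRooted f) :
    RealRooted (derivative f) := by
  unfold RealRooted at *
  by_cases h0 : f.natDegree = 0
  · obtain ⟨c, rfl⟩ := natDegree_eq_zero.mp h0
    simp
  · have hlt : (derivative f).natDegree < f.natDegree := natDegree_derivative_lt h0
    have h1 : f.roots.card ≤ (derivative f).roots.card + 1 := f.card_roots_le_derivative
    have h2 : (derivative f).roots.card ≤ (derivative f).natDegree := card_roots' _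
    omega

lemma rr_iterate (f : Polynomial ℝ) (hf : RealRooted f) (k : ℕ) :
    RealRooted (derivative^[k] f) := by
  induction k with
  | zero => simpa
  | succ k ih => rw [Function.iterate_succ_apply']; exact rr_derivative _ ih

lemma reverse_X_sub_C' (r : ℝ) : (X - C r).reverse = 1 - C r * X := by
  have h1 : (X - C r).natDegree = 1 := natDegree_X_sub_C r
  rw [reverse, h1]
  ext n
  simp [coeff_reflect, coeff_one, coeff_C_mul, coeff_X, coeff_sub, coeff_C, revAt]

lemma reverse_prod_linear (M : Multiset ℝ) (hM : ∀ r ∈ M, r ≠ 0) (c : ℝ) :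
    (C c * (M.map (fun r => X - C r)).prod).reverse
      = C (c * (M.map (fun r => -r)).prod) * (M.map (fun r => X - C r⁻¹)).prod := by
  induction M using Multiset.induction_on with
  | empty => simp
  | cons a s ih =>
    have ha : a ≠ 0 := hM a (Multiset.mem_cons_self a s)
    have ih' := ih (fun r hr => hM r (Multiset.mem_cons_of_mem hr))
    rw [Multiset.map_cons, Multiset.prod_cons,
      show C c * ((X - C a) * (s.map fun r => X - C r).prod)
        = (X - C a) * (C c * (s.map fun r => X - C r).prod) by ring,
      reverse_mul_of_domain, ih', reverse_X_sub_C']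
    rw [Multiset.map_cons, Multiset.prod_cons, Multiset.map_cons, Multiset.prod_cons]
    have hinv : a * a⁻¹ = 1 := mul_inv_cancel₀ ha
    have key : (1 : Polynomial ℝ) - C a * X = C (-a) * (X - C a⁻¹) := by
      rw [mul_sub, ← C_mul, show (-a) * a⁻¹ = -1 by rw [neg_mul, hinv]]
      simp only [C_neg, C_1]
      ring
    rw [key]
    simp only [C_mul, C_neg]
    ring

lemma rr_reverse (f : Polynomial ℝ) (h0 : f.coeff 0 ≠ 0) (hf : RealRooted f) :
    RealRooted f.reverse := by
  have hf0 : f ≠ 0 := fun h => h0 (by simp [h])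
  have hr0 : ∀ r ∈ f.roots, r ≠ 0 := by
    intro r hr hrz
    subst hrz
    have := isRoot_of_mem_roots hr
    rw [IsRoot, ← coeff_zero_eq_eval_zero] at this
    exact h0 this
  have hprod := C_leadingCoeff_mul_prod_multiset_X_sub_C hf
  have hrev : f.reverse
      = C (f.leadingCoeff * (f.roots.map (fun r => -r)).prod)
        * (f.roots.map (fun r => X - C r⁻¹)).prod := by
    conv_lhs => rw [← hprod]
    exact reverse_prod_linear f.roots hr0 f.leadingCoeff
  have hc : f.leadingCoeff * (f.roots.map (fun r => -r)).prod ≠ 0 := by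
    refine mul_ne_zero (leadingCoeff_ne_zero.mpr hf0) (fun h => ?_)
    obtain ⟨r, hr, hrz⟩ := Multiset.mem_map.mp (Multiset.prod_eq_zero_iff.mp h)
    exact hr0 r hr (neg_eq_zero.mp hrz)
  have hroots : f.reverse.roots = f.roots.map (fun r => r⁻¹) := by
    rw [hrev, roots_C_mul _ hc,
      show (Multiset.map (fun r => X - C r⁻¹) f.roots)
        = Multiset.map (fun a => X - C a) (f.roots.map (fun r => r⁻¹)) by
          rw [Multiset.map_map]; rfl,
      roots_multiset_prod_X_sub_C]
  have hntd : f.natTrailingDegree = 0 := natTrailingDegree_eq_zero.mpr (Or.inr h0)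
  unfold RealRooted at *
  rw [hroots, Multiset.card_map, f.reverse_natDegree, hntd, Nat.sub_zero, hf]

lemma df_one (m : ℕ) : (m + 1).descFactorial m = (m + 1).factorial := by
  induction m with
  | zero => rfl
  | succ t ih => rw [Nat.succ_descFactorial_succ, ih]; rfl

lemma df_two (m : ℕ) : 2 * (m + 2).descFactorial m = (m + 2).factorial := by
  induction m with
  | zero => rfl
  | succ t ih =>
    rw [show t + 1 + 2 = (t + 2) + 1 by ring, Nat.succ_descFactorial_succ,
      mul_left_comm, ih]
    rfl

set_option maxHeartbeats 1000000 in
theorem newton_inequality (n : ℕ) (a : ℕ → ℝ) (P : Polynomial ℝ)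
    (hP : P = ∑ i ∈ Finset.range (n + 1), Polynomial.C (a i) * Polynomial.X ^ i)
    (hpos : ∀ i ≤ n, 0 < a i) (hrr : RealRooted P) :
    ∀ i, 1 ≤ i → i < n →
      a (i - 1) * a (i + 1) * (1 + 1 / (i : ℝ)) * (1 + 1 / ((n : ℝ) - (i : ℝ))) ≤ a i ^ 2 := by
  intro i hi1 hin
  obtain ⟨k, rfl⟩ : ∃ k, i = k + 1 := ⟨i - 1, by omega⟩
  obtain ⟨m, rfl⟩ : ∃ m, n = k + m + 2 := ⟨n - k - 2, by omega⟩
  set N := k + m + 2 with hN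
  have hcoeff : ∀ j, P.coeff j = if j ≤ N then a j else 0 := by
    intro j
    rw [hP, finset_sum_coeff]
    simp only [coeff_C_mul, coeff_X_pow, mul_ite, mul_one, mul_zero]
    rw [Finset.sum_ite_eq (Finset.range (N + 1)) j a]
    simp [Nat.lt_succ_iff]
  have haN : 0 < a N := hpos N le_rfl
  have hak : 0 < a k := hpos k (by omega)
  have hak1 : 0 < a (k + 1) := hpos (k + 1) (by omega)
  have hak2 : 0 < a (k + 2) := hpos (k + 2) (by omega)
  -- the (i-1)-st derivative g
  obtain ⟨g, hgdef⟩ : ∃ g, g = derivative^[k] P := ⟨_, rfl⟩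
  have hgc : ∀ j, g.coeff j = ((j + k).descFactorial k : ℝ) * P.coeff (j + k) := by
    intro j
    rw [hgdef, coeff_iterate_derivative, nsmul_eq_mul]
  have hgrr : RealRooted g := by rw [hgdef]; exact rr_iterate P hrr k
  have hg0 : g.coeff 0 = (k.descFactorial k : ℝ) * a k := by
    rw [hgc, hcoeff]
    simp [hN]
    omega
  have hg1 : g.coeff 1 = ((1 + k).descFactorial k : ℝ) * a (k + 1) := by
    rw [hgc, hcoeff, if_pos (by omega : 1 + k ≤ N), show 1 + k = k + 1 by ring]
  have hg2 : g.coeff 2 = ((2 + k).descFactorial k : ℝ) * a (k + 2) := by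
    rw [hgc, hcoeff, if_pos (by omega : 2 + k ≤ N), show 2 + k = k + 2 by ring]
  have hdfk : (0:ℝ) < (k.descFactorial k : ℝ) := by
    rw [Nat.descFactorial_self]; exact_mod_cast k.factorial_pos
  have hg0pos : 0 < g.coeff 0 := by rw [hg0]; positivity
  have hgdeg : g.natDegree = m + 2 := by
    apply natDegree_eq_of_le_of_coeff_ne_zero
    · rw [natDegree_le_iff_coeff_eq_zero]
      intro j hj
      rw [hgc, hcoeff, if_neg (by omega)]
      ring
    · rw [hgc, hcoeff, if_pos (by omega : m + 2 + k ≤ N)]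
      have hne : (m + 2 + k).descFactorial k ≠ 0 := by
        rw [Ne, Nat.descFactorial_eq_zero_iff_lt]; omega
      have : (0:ℝ) < ((m + 2 + k).descFactorial k : ℝ) := by
        exact_mod_cast Nat.pos_of_ne_zero hne
      have := hpos (m + 2 + k) (by omega)
      positivity
  -- the reversal h
  obtain ⟨h, hhdef⟩ : ∃ h, h = g.reverse := ⟨_, rfl⟩
  have hhrr : RealRooted h := by rw [hhdef]; exact rr_reverse g hg0pos.ne' hgrr
  have hhdeg : h.natDegree = m + 2 := by
    rw [hhdef, reverse_natDegree, natTrailingDegree_eq_zero.mpr (Or.inr hg0pos.ne'),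
      Nat.sub_zero, hgdeg]
  have hhc : ∀ j, j ≤ m + 2 → h.coeff j = g.coeff (m + 2 - j) := by
    intro j hj
    rw [hhdef, coeff_reverse, hgdeg, revAt_le hj]
  -- the quadratic Q
  obtain ⟨Q, hQdef⟩ : ∃ Q, Q = derivative^[m] h := ⟨_, rfl⟩
  have hQrr : RealRooted Q := by rw [hQdef]; exact rr_iterate h hhrr m
  have hQc : ∀ j, Q.coeff j = ((j + m).descFactorial m : ℝ) * h.coeff (j + m) := by
    intro j
    rw [hQdef, coeff_iterate_derivative, nsmul_eq_mul]
  have hQ2 : Q.coeff 2 = ((2 + m).descFactorial m : ℝ) * ((k.descFactorial k : ℝ) * a k) := by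
    rw [hQc, hhc (2 + m) (by omega), show m + 2 - (2 + m) = 0 by omega, hg0]
  have hQ1 : Q.coeff 1 = ((1 + m).descFactorial m : ℝ)
      * (((1 + k).descFactorial k : ℝ) * a (k + 1)) := by
    rw [hQc, hhc (1 + m) (by omega), show m + 2 - (1 + m) = 1 by omega, hg1]
  have hQ0 : Q.coeff 0 = (m.descFactorial m : ℝ)
      * (((2 + k).descFactorial k : ℝ) * a (k + 2)) := by
    rw [hQc, hhc (0 + m) (by omega), show m + 2 - (0 + m) = 2 by omega, hg2, zero_add]
  have hdfm2 : (0:ℝ) < ((2 + m).descFactorial m : ℝ) := by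
    have hne : (2 + m).descFactorial m ≠ 0 := by
      rw [Ne, Nat.descFactorial_eq_zero_iff_lt]; omega
    exact_mod_cast Nat.pos_of_ne_zero hne
  have hQ2pos : 0 < Q.coeff 2 := by rw [hQ2]; positivity
  have hQdeg : Q.natDegree = 2 := by
    apply natDegree_eq_of_le_of_coeff_ne_zero
    · rw [natDegree_le_iff_coeff_eq_zero]
      intro j hj
      rw [hQc, coeff_eq_zero_of_natDegree_lt (by omega : h.natDegree < j + m), mul_zero]
    · exact hQ2pos.ne'
  -- Q has a real root
  have hcard : Q.roots.card = 2 := by rw [hQrr, hQdeg]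
  obtain ⟨x, hx⟩ := Multiset.card_pos_iff_exists_mem.mp (by rw [hcard]; norm_num)
  have heval : Q.eval x = 0 := isRoot_of_mem_roots hx
  have hexp : Q.eval x = Q.coeff 0 + Q.coeff 1 * x + Q.coeff 2 * x ^ 2 := by
    rw [eval_eq_sum_range, hQdeg, Finset.sum_range_succ, Finset.sum_range_succ,
      Finset.sum_range_succ, Finset.sum_range_zero]
    ring
  have hquad : Q.coeff 2 * (x * x) + Q.coeff 1 * x + Q.coeff 0 = 0 := by
    rw [hexp] at heval; linear_combination heval
  have hdisc := (quadratic_eq_zero_iff_discrim_eq_sq hQ2pos.ne' x).mp hquad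
  rw [discrim] at hdisc
  have hd : 4 * (Q.coeff 2 * Q.coeff 0) ≤ Q.coeff 1 ^ 2 := by
    linarith [hdisc, sq_nonneg (2 * Q.coeff 2 * x + Q.coeff 1)]
  -- translate descFactorials into real products
  have eK : (k.descFactorial k : ℝ) = (k.factorial : ℝ) := by rw [Nat.descFactorial_self]
  have eK1 : ((1 + k).descFactorial k : ℝ) = ((k : ℝ) + 1) * (k.factorial : ℝ) := by
    rw [show 1 + k = k + 1 by ring, df_one, Nat.factorial_succ]; push_cast; ring
  have eK2 : 2 * ((2 + k).descFactorial k : ℝ)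
      = ((k : ℝ) + 2) * ((k : ℝ) + 1) * (k.factorial : ℝ) := by
    rw [show 2 + k = k + 2 by ring, show (2:ℝ) * ((k + 2).descFactorial k : ℝ)
        = ((2 * (k + 2).descFactorial k : ℕ) : ℝ) by push_cast; ring, df_two,
      show k + 2 = (k + 1) + 1 by ring, Nat.factorial_succ, Nat.factorial_succ]
    push_cast; ring
  have eM : (m.descFactorial m : ℝ) = (m.factorial : ℝ) := by rw [Nat.descFactorial_self]
  have eM1 : ((1 + m).descFactorial m : ℝ) = ((m : ℝ) + 1) * (m.factorial : ℝ) := by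
    rw [show 1 + m = m + 1 by ring, df_one, Nat.factorial_succ]; push_cast; ring
  have eM2 : 2 * ((2 + m).descFactorial m : ℝ)
      = ((m : ℝ) + 2) * ((m : ℝ) + 1) * (m.factorial : ℝ) := by
    rw [show 2 + m = m + 2 by ring, show (2:ℝ) * ((m + 2).descFactorial m : ℝ)
        = ((2 * (m + 2).descFactorial m : ℕ) : ℝ) by push_cast; ring, df_two,
      show m + 2 = (m + 1) + 1 by ring, Nat.factorial_succ, Nat.factorial_succ]
    push_cast; ring
  have hKpos : (0:ℝ) < (k.factorial : ℝ) := by exact_mod_cast k.factorial_pos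
  have hMpos : (0:ℝ) < (m.factorial : ℝ) := by exact_mod_cast m.factorial_pos
  set K := (k.factorial : ℝ) with hK
  set M := (m.factorial : ℝ) with hM
  set kk := (k : ℝ)
  set mm := (m : ℝ)
  have hkk : (0:ℝ) ≤ kk := Nat.cast_nonneg k
  have hmm : (0:ℝ) ≤ mm := Nat.cast_nonneg m
  -- key inequality
  have key : (mm + 2) * (kk + 2) * (a k * a (k + 2))
      ≤ (mm + 1) * (kk + 1) * a (k + 1) ^ 2 := by
    have hposc : (0:ℝ) < (mm + 1) * (kk + 1) * (M * K) ^ 2 := by positivity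
    rw [← mul_le_mul_iff_of_pos_right hposc]
    have e2 : 2 * Q.coeff 2 = (mm + 2) * (mm + 1) * M * (K * a k) := by
      rw [hQ2, eK]; linear_combination (K * a k) * eM2
    have e1 : Q.coeff 1 = (mm + 1) * M * ((kk + 1) * K * a (k + 1)) := by
      rw [hQ1, eM1, eK1]
    have e0 : 2 * Q.coeff 0 = M * ((kk + 2) * (kk + 1) * K * a (k + 2)) := by
      rw [hQ0, eM]; linear_combination (M * a (k + 2)) * eK2
    calc (mm + 2) * (kk + 2) * (a k * a (k + 2)) * ((mm + 1) * (kk + 1) * (M * K) ^ 2)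
        = (2 * Q.coeff 2) * (2 * Q.coeff 0) := by rw [e2, e0]; ring
      _ ≤ Q.coeff 1 ^ 2 := by
          have h4 : (2 * Q.coeff 2) * (2 * Q.coeff 0) = 4 * (Q.coeff 2 * Q.coeff 0) := by ring
          linarith [hd, h4]
      _ = (mm + 1) * (kk + 1) * a (k + 1) ^ 2 * ((mm + 1) * (kk + 1) * (M * K) ^ 2) := by
          rw [e1]; ring
  -- finish
  have hcast1 : (((k + 1 : ℕ)) : ℝ) = kk + 1 := by push_cast; ring
  have hcast2 : (((k + m + 2 : ℕ)) : ℝ) - (kk + 1) = mm + 1 := by push_cast; ring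
  rw [show k + 1 - 1 = k by omega, show k + 1 + 1 = k + 2 by ring, hcast1, hN, hcast2]
  have h1 : (1:ℝ) + 1 / (kk + 1) = (kk + 2) / (kk + 1) := by
    field_simp; ring
  have h2 : (1:ℝ) + 1 / (mm + 1) = (mm + 2) / (mm + 1) := by
    field_simp; ring
  rw [h1, h2]
  have hq : (0:ℝ) < (kk + 1) * (mm + 1) := by positivity
  have hk0 : kk + 1 ≠ 0 := by positivity
  have hm0 : mm + 1 ≠ 0 := by positivity
  have hsplit : a k * a (k + 2) * ((kk + 2) / (kk + 1)) * ((mm + 2) / (mm + 1))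
      = (mm + 2) * (kk + 2) * (a k * a (k + 2)) / ((kk + 1) * (mm + 1)) := by
    field_simp
  rw [hsplit, div_le_iff₀ hq]
  exact key.trans_eq (by ring)
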